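/- The function u(x,t) = 2·(∂²/∂x²) log(1 + exp(√c·(x − δ + c²·t))) is a solution of the integrable fifth-order KdV equation ∂u/∂t = ∂⁵u/∂x⁵ + 10u·∂³u/∂x³ + 20(∂u/∂x)·(∂²u/∂x²) + 30u²·∂u/∂x for all (x,t) ∈ ℝ². -/

import Mathlib

/-- Sigmoid function. -/
noncomputable def sigma1 (z : ℝ) : ℝ := Real.exp z / (1 + Real.exp z)

lemma one_add_exp_ne (z : ℝ) : (1 : ℝ) + Real.exp z ≠ 0 := by positivity

lemma sigma1_hasDerivAt (z : ℝ) :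
    HasDerivAt sigma1 (sigma1 z - sigma1 z ^ 2) z := by
  have h := (Real.hasDerivAt_exp z).div
      ((Real.hasDerivAt_exp z).const_add 1) (one_add_exp_ne z)
  refine h.congr_deriv ?_
  have hne := one_add_exp_ne z
  unfold sigma1
  field_simp

/-- Successive "derivative polynomials" of the sigmoid. -/
noncomputable def Qp : ℕ → ℝ → ℝ
  | 0, s => s
  | 1, s => s - s ^ 2
  | 2, s => s - 3 * s ^ 2 + 2 * s ^ 3
  | 3, s => s - 7 * s ^ 2 + 12 * s ^ 3 - 6 * s ^ 4
  | 4, s => s - 15 * s ^ 2 + 50 * s ^ 3 - 60 * s ^ 4 + 24 * s ^ 5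
  | 5, s => s - 31 * s ^ 2 + 180 * s ^ 3 - 390 * s ^ 4 + 360 * s ^ 5 - 120 * s ^ 6
  | 6, s => s - 63 * s ^ 2 + 602 * s ^ 3 - 2100 * s ^ 4 + 3360 * s ^ 5 - 2520 * s ^ 6 + 720 * s ^ 7
  | _, _ => 0

lemma dQp (a b : ℝ) (n : ℕ) (hn : n ≤ 5) (x : ℝ) :
    HasDerivAt (fun y => Qp n (sigma1 (a * y + b))) (a * Qp (n + 1) (sigma1 (a * x + b))) x := by
  have hz : HasDerivAt (fun y : ℝ => a * y + b) a x := by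
    simpa using ((hasDerivAt_id x).const_mul a).add_const b
  have hs : HasDerivAt (fun y => sigma1 (a * y + b))
      ((sigma1 (a * x + b) - sigma1 (a * x + b) ^ 2) * a) x :=
    ((sigma1_hasDerivAt (a * x + b)).comp x hz :)
  interval_cases n <;> simp only [Qp]
  · refine hs.congr_deriv ?_; ring
  · refine (hs.sub (hs.pow 2)).congr_deriv ?_; push_cast; ring
  · refine ((hs.sub ((hs.pow 2).const_mul 3)).add ((hs.pow 3).const_mul 2)).congr_deriv ?_
    push_cast; ring
  · refine (((hs.sub ((hs.pow 2).const_mul 7)).add ((hs.pow 3).const_mul 12)).sub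
      ((hs.pow 4).const_mul 6)).congr_deriv ?_
    push_cast; ring
  · refine ((((hs.sub ((hs.pow 2).const_mul 15)).add ((hs.pow 3).const_mul 50)).sub
      ((hs.pow 4).const_mul 60)).add ((hs.pow 5).const_mul 24)).congr_deriv ?_
    push_cast; ring
  · refine (((((hs.sub ((hs.pow 2).const_mul 31)).add ((hs.pow 3).const_mul 180)).sub
      ((hs.pow 4).const_mul 390)).add ((hs.pow 5).const_mul 360)).sub
      ((hs.pow 6).const_mul 120)).congr_deriv ?_
    push_cast; ring

/-- The tower of derivatives of `y ↦ log (1 + exp (a y + b))`. -/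
noncomputable def Ln (a b : ℝ) : ℕ → ℝ → ℝ
  | 0 => fun y => Real.log (1 + Real.exp (a * y + b))
  | (n + 1) => fun y => a ^ (n + 1) * Qp n (sigma1 (a * y + b))

lemma dLn (a b : ℝ) (n : ℕ) (hn : n ≤ 6) (x : ℝ) :
    HasDerivAt (Ln a b n) (Ln a b (n + 1) x) x := by
  match n with
  | 0 =>
    simp only [Ln, Qp]
    have hz : HasDerivAt (fun y : ℝ => a * y + b) a x := by
      simpa using ((hasDerivAt_id x).const_mul a).add_const b
    have hexp : HasDerivAt (fun y => 1 + Real.exp (a * y + b)) (Real.exp (a * x + b) * a) x :=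
      (((Real.hasDerivAt_exp (a * x + b)).comp x hz).const_add 1 :)
    have h := hexp.log (one_add_exp_ne (a * x + b))
    refine h.congr_deriv ?_
    have hne := one_add_exp_ne (a * x + b)
    unfold sigma1
    field_simp
    ring
  | (m + 1) =>
    simp only [Ln]
    have h := (dQp a b m (by omega) x).const_mul (a ^ (m + 1))
    refine h.congr_deriv ?_
    ring

lemma itLn (a b : ℝ) (n : ℕ) (hn : n ≤ 7) :
    iteratedDeriv n (Ln a b 0) = Ln a b n := by
  induction n with
  | zero => simp [iteratedDeriv_zero]
  | succ m ih =>
    rw [iteratedDeriv_succ, ih (by omega)]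
    funext y
    exact (dLn a b m (by omega) y).deriv

lemma itLn2 (a b : ℝ) (n : ℕ) (hn : n ≤ 5) :
    iteratedDeriv n (fun y => 2 * Ln a b 2 y) = fun y => 2 * Ln a b (n + 2) y := by
  induction n with
  | zero => simp [iteratedDeriv_zero]
  | succ m ih =>
    rw [iteratedDeriv_succ, ih (by omega)]
    funext y
    exact ((dLn a b (m + 2) (by omega) y).const_mul 2).deriv

/-- The 1-soliton `u(x,t) = 2 (∂²/∂x²) log(1 + exp(√c (x − δ + c² t)))` solves the
integrable fifth-order KdV equation
`∂u/∂t = ∂⁵u/∂x⁵ + 10 u ∂³u/∂x³ + 20 (∂u/∂x)(∂²u/∂x²) + 30 u² ∂u/∂x` on all of `ℝ²`. -/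
theorem one_soliton_solves_fifth_order_KdV (c δ : ℝ) (hc : 0 < c) (u : ℝ → ℝ → ℝ)
    (hu : u = fun x t : ℝ =>
      2 * iteratedDeriv 2
        (fun y : ℝ => Real.log (1 + Real.exp (Real.sqrt c * (y - δ + c ^ 2 * t)))) x) :
    ∀ x t : ℝ,
      deriv (fun s : ℝ => u x s) t =
        iteratedDeriv 5 (fun y : ℝ => u y t) x
          + 10 * u x t * iteratedDeriv 3 (fun y : ℝ => u y t) x
          + 20 * deriv (fun y : ℝ => u y t) x * iteratedDeriv 2 (fun y : ℝ => u y t) x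
          + 30 * (u x t) ^ 2 * deriv (fun y : ℝ => u y t) x := by
  subst hu
  obtain ⟨a, ha0, rfl⟩ : ∃ a : ℝ, 0 < a ∧ c = a ^ 2 :=
    ⟨Real.sqrt c, Real.sqrt_pos.2 hc, (Real.sq_sqrt hc.le).symm⟩
  rw [Real.sqrt_sq ha0.le]
  intro x t
  beta_reduce
  -- rewrite the inner function as `Ln a (b s) 0`
  have harg : ∀ s : ℝ,
      (fun y : ℝ => Real.log (1 + Real.exp (a * (y - δ + (a ^ 2) ^ 2 * s))))
        = Ln a (a * ((a ^ 2) ^ 2 * s - δ)) 0 := by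
    intro s
    funext y
    simp only [Ln]
    rw [show a * (y - δ + (a ^ 2) ^ 2 * s) = a * y + a * ((a ^ 2) ^ 2 * s - δ) from by ring]
  set b : ℝ → ℝ := fun s => a * ((a ^ 2) ^ 2 * s - δ) with hb
  -- time derivative
  have htime : (fun s : ℝ => 2 * iteratedDeriv 2
      (fun y : ℝ => Real.log (1 + Real.exp (a * (y - δ + (a ^ 2) ^ 2 * s)))) x)
      = fun s : ℝ => 2 * (a ^ 2 *
        (sigma1 (a * (x - δ + (a ^ 2) ^ 2 * s)) - sigma1 (a * (x - δ + (a ^ 2) ^ 2 * s)) ^ 2)) := by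
    funext s
    rw [harg s, itLn a (b s) 2 (by omega)]
    simp only [Ln, Qp]
    rw [show a * x + b s = a * (x - δ + (a ^ 2) ^ 2 * s) from by rw [hb]; ring]
  have hW : HasDerivAt (fun s : ℝ => a * (x - δ + (a ^ 2) ^ 2 * s)) (a * (a ^ 2) ^ 2) t := by
    have h1 : HasDerivAt (fun s : ℝ => x - δ + (a ^ 2) ^ 2 * s) ((a ^ 2) ^ 2) t := by
      simpa using ((hasDerivAt_id t).const_mul ((a ^ 2) ^ 2)).const_add (x - δ)
    simpa using h1.const_mul a
  have hsW : HasDerivAt (fun s => sigma1 (a * (x - δ + (a ^ 2) ^ 2 * s)))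
      ((sigma1 (a * (x - δ + (a ^ 2) ^ 2 * t)) - sigma1 (a * (x - δ + (a ^ 2) ^ 2 * t)) ^ 2)
        * (a * (a ^ 2) ^ 2)) t :=
    (sigma1_hasDerivAt _).comp t hW
  have hLHS : deriv (fun s : ℝ => 2 * iteratedDeriv 2
      (fun y : ℝ => Real.log (1 + Real.exp (a * (y - δ + (a ^ 2) ^ 2 * s)))) x) t
      = 2 * (a ^ 2 * ((sigma1 (a * (x - δ + (a ^ 2) ^ 2 * t))
          - sigma1 (a * (x - δ + (a ^ 2) ^ 2 * t)) ^ 2) * (a * (a ^ 2) ^ 2)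
        - 2 * sigma1 (a * (x - δ + (a ^ 2) ^ 2 * t)) ^ 1
          * ((sigma1 (a * (x - δ + (a ^ 2) ^ 2 * t))
              - sigma1 (a * (x - δ + (a ^ 2) ^ 2 * t)) ^ 2) * (a * (a ^ 2) ^ 2)))) := by
    rw [htime]
    exact (((hsW.sub (hsW.pow 2)).const_mul (a ^ 2)).const_mul 2).deriv
  -- spatial function
  have hspace : (fun y : ℝ => 2 * iteratedDeriv 2
      (fun y' : ℝ => Real.log (1 + Real.exp (a * (y' - δ + (a ^ 2) ^ 2 * t)))) y)
      = fun y : ℝ => 2 * Ln a (b t) 2 y := by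
    funext y
    rw [harg t, itLn a (b t) 2 (by omega)]
  rw [hLHS, hspace, itLn2 a (b t) 5 (by omega), itLn2 a (b t) 3 (by omega),
    itLn2 a (b t) 2 (by omega)]
  have hder : deriv (fun y : ℝ => 2 * Ln a (b t) 2 y) x = 2 * Ln a (b t) 3 x :=
    ((dLn a (b t) 2 (by omega) x).const_mul 2).deriv
  rw [hder, harg t, itLn a (b t) 2 (by omega)]
  simp only [Ln, Qp]
  rw [show a * x + b t = a * (x - δ + (a ^ 2) ^ 2 * t) from by rw [hb]; ring]
  ring
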